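/- Let (g,⟨·,·⟩) be a quadratic nilpotent Lie algebra of dimension n. If g admits an (n−1)-symplectic structure, i.e. a Lie subalgebra h of dimension n−1 together with 2-cocycles θ_1,…,θ_{n−1} on g such that ⋂_{i=1}^{n−1} {u ∈ g : θ_i(u,v) = 0 for all v ∈ g} = {0} and θ_i(h,h) = 0 for all i, then g is abelian. -/

import Mathlib

/-- A 2-cocycle on a real Lie algebra: an alternating bilinear form `θ` satisfying
`θ([u,v],w) + θ([v,w],u) + θ([w,u],v) = 0`. -/
def IsTwoCocycle {L : Type*} [LieRing L] [LieAlgebra ℝ L]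
    (θ : L →ₗ[ℝ] L →ₗ[ℝ] ℝ) : Prop :=
  (∀ u : L, θ u u = 0) ∧
  ∀ u v w : L, θ ⁅u, v⁆ w + θ ⁅v, w⁆ u + θ ⁅w, u⁆ v = 0

/-- A nilpotent quadratic Lie algebra of dimension `n` admitting an `(n-1)`-symplectic
structure is abelian. -/
theorem nilpotent_quadratic_with_nminus1_symplectic_is_abelian
    {L : Type*} [LieRing L] [LieAlgebra ℝ L] [FiniteDimensional ℝ L]
    (B : L →ₗ[ℝ] L →ₗ[ℝ] ℝ)
    (hBsymm : ∀ u v : L, B u v = B v u)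
    (hBnd : ∀ u : L, (∀ v : L, B u v = 0) → u = 0)
    (hBinv : ∀ u v w : L, B ⁅u, v⁆ w + B v ⁅u, w⁆ = 0)
    (hnilp : LieRing.IsNilpotent L)
    (n : ℕ) (hdim : Module.finrank ℝ L = n)
    (H : LieSubalgebra ℝ L) (hHdim : Module.finrank ℝ H = n - 1)
    (θ : Fin (n - 1) → (L →ₗ[ℝ] L →ₗ[ℝ] ℝ))
    (hθ : ∀ i, IsTwoCocycle (θ i))
    (hθnd : ∀ u : L, (∀ i, ∀ v : L, θ i u v = 0) → u = 0)
    (hiso : ∀ i, ∀ u ∈ H, ∀ v ∈ H, θ i u v = 0) :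
    IsLieAbelian L := by
  classical
  rcases lt_or_ge n 2 with hn | hn
  · -- then `n - 1 = 0`, so `hθnd` says every element is zero
    have h0 : n - 1 = 0 := by omega
    have hz : ∀ u : L, u = 0 := by
      intro u
      apply hθnd
      intro i
      exact absurd i.isLt (by omega)
    exact ⟨fun u v => hz _⟩
  -- Main case: `n ≥ 2`.
  have hHne : H.toSubmodule ≠ ⊤ := by
    intro htop
    have : Module.finrank ℝ H.toSubmodule = n := by
      rw [htop, finrank_top, hdim]
    have : Module.finrank ℝ H = n := this
    omega
  -- find `y ∉ H` with `⁅L, y⁆ ⊆ H`, using nilpotency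
  obtain ⟨k, hk⟩ := (LieModule.isNilpotent_iff ℝ L L).mp hnilp
  have hP : ∃ m, ∀ z ∈ LieModule.lowerCentralSeries ℝ L L m, z ∈ H := by
    refine ⟨k, fun z hz => ?_⟩
    rw [hk] at hz
    simp only [LieSubmodule.mem_bot] at hz
    simp [hz]
  set i := Nat.find hP with hi
  have hispec : ∀ z ∈ LieModule.lowerCentralSeries ℝ L L i, z ∈ H := Nat.find_spec hP
  have hi0 : i ≠ 0 := by
    intro h
    apply hHne
    rw [eq_top_iff]
    intro z _
    have := hispec z
    rw [h, LieModule.lowerCentralSeries_zero] at this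
    exact this (LieSubmodule.mem_top z)
  have hlt : ¬ ∀ z ∈ LieModule.lowerCentralSeries ℝ L L (i - 1), z ∈ H :=
    Nat.find_min hP (by omega)
  push_neg at hlt
  obtain ⟨y, hylcs, hyH⟩ := hlt
  have hbr : ∀ u : L, ⁅u, y⁆ ∈ H := by
    intro u
    apply hispec
    have : i - 1 + 1 = i := by omega
    rw [← this, LieModule.lowerCentralSeries_succ]
    exact LieSubmodule.lie_mem_lie (LieSubmodule.mem_top u) hylcs
  -- `H ⊔ ℝy = ⊤`
  have hsup : H.toSubmodule ⊔ Submodule.span ℝ {y} = ⊤ := by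
    have hylem : y ∈ H.toSubmodule ⊔ Submodule.span ℝ {y} :=
      Submodule.mem_sup_right (Submodule.mem_span_singleton_self y)
    have hlt : H.toSubmodule < H.toSubmodule ⊔ Submodule.span ℝ {y} :=
      lt_of_le_of_ne le_sup_left (by intro h; rw [← h] at hylem; exact hyH hylem)
    apply Submodule.eq_top_of_finrank_eq
    have h1 : Module.finrank ℝ H.toSubmodule <
        Module.finrank ℝ (H.toSubmodule ⊔ Submodule.span ℝ {y} : Submodule ℝ L) :=
      Submodule.finrank_lt_finrank_of_lt hlt
    have h2 : Module.finrank ℝ (H.toSubmodule ⊔ Submodule.span ℝ {y} : Submodule ℝ L) ≤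
        Module.finrank ℝ L := Submodule.finrank_le _
    have h3 : Module.finrank ℝ H.toSubmodule = n - 1 := hHdim
    omega
  have hdec : ∀ u : L, ∃ a, a ∈ H ∧ ∃ t : ℝ, u = a + t • y := by
    intro u
    have : u ∈ H.toSubmodule ⊔ Submodule.span ℝ {y} := hsup ▸ Submodule.mem_top
    obtain ⟨a, ha, b, hb, hab⟩ := Submodule.mem_sup.mp this
    obtain ⟨t, ht⟩ := Submodule.mem_span_singleton.mp hb
    exact ⟨a, ha, t, by rw [← hab, ← ht]⟩
  -- `H` is an ideal
  have hideal : ∀ u : L, ∀ a ∈ H, ⁅u, a⁆ ∈ H := by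
    intro u a ha
    obtain ⟨h, hh, t, rfl⟩ := hdec u
    have h1 : ⁅y, a⁆ ∈ H := by
      rw [← lie_skew]
      exact neg_mem (hbr a)
    have : ⁅h + t • y, a⁆ = ⁅h, a⁆ + t • ⁅y, a⁆ := by
      rw [add_lie, smul_lie]
    rw [this]
    exact add_mem (H.lie_mem hh ha) (Submodule.smul_mem H.toSubmodule t h1)
  -- `H` is abelian, using the cocycles
  have hHab : ∀ a ∈ H, ∀ b ∈ H, ⁅a, b⁆ = 0 := by
    intro a ha b hb
    apply hθnd
    intro j v
    have hcoc := (hθ j).2 a b v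
    have e1 : θ j ⁅b, v⁆ a = 0 := by
      have hbv : ⁅b, v⁆ ∈ H := by
        rw [← lie_skew]; exact neg_mem (hideal v b hb)
      exact hiso j _ hbv a ha
    have e2 : θ j ⁅v, a⁆ b = 0 := hiso j _ (hideal v a ha) b hb
    rw [e1, e2] at hcoc
    linarith
  -- `⁅a, y⁆ = 0` for `a ∈ H`, using nondegenerate invariant `B`
  have hcen : ∀ a ∈ H, ⁅a, y⁆ = 0 := by
    intro a ha
    apply hBnd
    intro v
    obtain ⟨b, hb, t, rfl⟩ := hdec v
    have e1 : B ⁅a, y⁆ b = 0 := by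
      have := hBinv a y b
      rw [hHab a ha b hb] at this
      simpa using this
    have e2 : B ⁅a, y⁆ y = 0 := by
      have h := hBinv a y y
      rw [hBsymm y ⁅a, y⁆] at h
      linarith
    rw [map_add, map_smul, e1, e2]
    simp
  -- conclude
  constructor
  intro u v
  obtain ⟨a, ha, s, rfl⟩ := hdec u
  obtain ⟨b, hb, t, rfl⟩ := hdec v
  have hya : ⁅y, b⁆ = 0 := by rw [← lie_skew, hcen b hb, neg_zero]
  simp [add_lie, lie_add, smul_lie, lie_smul, hHab a ha b hb, hcen a ha, hya]
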